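/- Let Λ be a free ℤ-module of finite rank and c : Λ → Λ a ℤ-linear involution. Then the quotient groups Λ/(Λ⁺ + Λ⁻) and Λ⁻/(c−1)Λ are finite and their orders satisfy #(Λ/(Λ⁺ + Λ⁻)) · #(Λ⁻/(c−1)Λ) = 2^{rank Λ⁻}. -/

import Mathlib

open LinearMap Submodule

/-- For a free finite `ℤ`-module `M`, `M ⧸ 2M` is equivalent to `(ZMod 2)^rank`, where
`2M` is presented as the range of the doubling map `id + id`. -/
private noncomputable def quotTwoEquiv (M : Type*) [AddCommGroup M] [Module ℤ M]
    [Module.Free ℤ M] [Module.Finite ℤ M] :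
    (M ⧸ LinearMap.range ((LinearMap.id + LinearMap.id : M →ₗ[ℤ] M))) ≃
      (Fin (Module.finrank ℤ M) → ZMod 2) := by
  set e := (Module.finBasis ℤ M).equivFun with he
  have h : (LinearMap.range ((LinearMap.id + LinearMap.id : M →ₗ[ℤ] M))).map
      (e : M →ₗ[ℤ] (Fin (Module.finrank ℤ M) → ℤ)) =
      Submodule.pi Set.univ (fun _ => Ideal.span {((2:ℕ):ℤ)}) := by
    ext x
    simp only [Submodule.mem_map, LinearMap.mem_range, Submodule.mem_pi, Set.mem_univ,
      forall_true_left, Ideal.mem_span_singleton, LinearMap.add_apply, LinearMap.id_apply]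
    constructor
    · rintro ⟨-, ⟨y, rfl⟩, rfl⟩ i
      refine ⟨e y i, ?_⟩
      rw [LinearEquiv.coe_coe, map_add, Pi.add_apply]
      push_cast
      ring
    · intro hx
      choose k hk using hx
      refine ⟨e.symm k + e.symm k, ⟨e.symm k, rfl⟩, ?_⟩
      rw [LinearEquiv.coe_coe, map_add, LinearEquiv.apply_symm_apply]
      funext i
      have := hk i
      push_cast at this
      rw [Pi.add_apply, this]
      ring
  have E1 := Submodule.Quotient.equiv
      (LinearMap.range ((LinearMap.id + LinearMap.id : M →ₗ[ℤ] M)))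
      (Submodule.pi Set.univ (fun _ => Ideal.span {((2:ℕ):ℤ)})) e h
  have E2 := Submodule.quotientPi (fun _ : Fin (Module.finrank ℤ M) => Ideal.span {((2:ℕ):ℤ)})
  letI i1 : Module ℤ (M ⧸ LinearMap.range ((LinearMap.id + LinearMap.id : M →ₗ[ℤ] M))) :=
    Submodule.Quotient.module _
  letI i2 : Module ℤ ((Fin (Module.finrank ℤ M) → ℤ) ⧸
      Submodule.pi Set.univ (fun _ => Ideal.span {((2:ℕ):ℤ)})) :=
    Submodule.Quotient.module _
  letI i3 : Module ℤ (ℤ ⧸ Ideal.span {((2:ℕ):ℤ)}) := Submodule.Quotient.module _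
  have E3 := E1.toEquiv
  have E4 := E2.toEquiv
  have E5 : _ ≃ (Fin (Module.finrank ℤ M) → ZMod 2) :=
    Equiv.piCongrRight fun _ : Fin (Module.finrank ℤ M) =>
      (Int.quotientSpanNatEquivZMod 2).toEquiv
  exact E3.trans (E4.trans E5)

private theorem quotTwo_card (M : Type*) [AddCommGroup M] [Module ℤ M]
    [Module.Free ℤ M] [Module.Finite ℤ M] :
    Nat.card (M ⧸ LinearMap.range ((LinearMap.id + LinearMap.id : M →ₗ[ℤ] M))) =
      2 ^ Module.finrank ℤ M := by
  rw [Nat.card_congr (quotTwoEquiv M), Nat.card_pi]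
  simp [Nat.card_zmod]

/-- Let `Λ` be a free `ℤ`-module of finite rank and `c : Λ → Λ` a `ℤ`-linear involution.
Then the quotient groups `Λ/(Λ⁺ + Λ⁻)` and `Λ⁻/(c−1)Λ` are finite and their orders
satisfy `#(Λ/(Λ⁺ + Λ⁻)) · #(Λ⁻/(c−1)Λ) = 2^(rank Λ⁻)`. -/
theorem card_quotient_sup_mul_card_quotient_range (Λ : Type*) [AddCommGroup Λ] [Module ℤ Λ]
    [Module.Free ℤ Λ] [Module.Finite ℤ Λ]
    (c : Λ →ₗ[ℤ] Λ) (hc : c ∘ₗ c = LinearMap.id) :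
    Finite (Λ ⧸ (LinearMap.ker (c - LinearMap.id) ⊔ LinearMap.ker (c + LinearMap.id))) ∧
    Finite ((LinearMap.ker (c + LinearMap.id)).toAddSubgroup ⧸
      (LinearMap.range (c - LinearMap.id)).toAddSubgroup.addSubgroupOf
        (LinearMap.ker (c + LinearMap.id)).toAddSubgroup) ∧
    Nat.card (Λ ⧸ (LinearMap.ker (c - LinearMap.id) ⊔ LinearMap.ker (c + LinearMap.id))) *
      Nat.card ((LinearMap.ker (c + LinearMap.id)).toAddSubgroup ⧸
        (LinearMap.range (c - LinearMap.id)).toAddSubgroup.addSubgroupOf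
          (LinearMap.ker (c + LinearMap.id)).toAddSubgroup) =
      2 ^ Module.finrank ℤ (LinearMap.ker (c + LinearMap.id)) := by
  classical
  have hcc : ∀ x, c (c x) = x := fun x => by
    have := LinearMap.ext_iff.mp hc x
    simpa using this
  set P : Submodule ℤ Λ := LinearMap.ker (c - LinearMap.id) with hPdef
  set N : Submodule ℤ Λ := LinearMap.ker (c + LinearMap.id) with hNdef
  set R : Submodule ℤ Λ := LinearMap.range (c - LinearMap.id) with hRdef
  set T : Submodule ℤ Λ :=
    Submodule.map (LinearMap.id + LinearMap.id : Λ →ₗ[ℤ] Λ) N with hTdef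
  have hNmem : ∀ x, x ∈ N ↔ c x = -x := fun x => by
    simp [hNdef, LinearMap.mem_ker, add_eq_zero_iff_eq_neg]
  have hPmem : ∀ x, x ∈ P ↔ c x = x := fun x => by
    simp [hPdef, LinearMap.mem_ker, sub_eq_zero]
  have hTmem : ∀ x, x ∈ T ↔ ∃ y ∈ N, y + y = x := fun x => by
    simp [hTdef, Submodule.mem_map]
  have hRN : R ≤ N := by
    rintro x ⟨y, rfl⟩
    rw [hNmem]
    simp [map_sub, hcc, neg_sub]
  have hTR : T ≤ R := by
    intro x hx
    obtain ⟨y, hy, rfl⟩ := (hTmem x).mp hx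
    refine ⟨-y, ?_⟩
    have hcy := (hNmem y).mp hy
    simp [hcy]
  have hTN : T ≤ N := hTR.trans hRN
  set f : Λ →ₗ[ℤ] Λ := c - LinearMap.id with hfdef
  set N' := N.toAddSubgroup with hN'def
  set R' := R.toAddSubgroup with hR'def
  set T' := T.toAddSubgroup with hT'def
  have hRN' : R' ≤ N' := hRN
  have hTR' : T' ≤ R' := hTR
  -- Claim A : Nat.card (Λ ⧸ (P ⊔ N)) = T'.relIndex R'
  have claimA : Nat.card (Λ ⧸ (P ⊔ N)) = T'.relIndex R' := by
    set Q := R' ⧸ T'.addSubgroupOf R' with hQdef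
    have hψ : ∀ x : Λ, f x ∈ R' := fun x => ⟨x, rfl⟩
    set ψ : Λ →+ R' :=
      { toFun := fun x => ⟨f x, hψ x⟩
        map_zero' := by ext; simp
        map_add' := fun x y => by ext; simp } with hψdef
    set φ : Λ →+ Q := (QuotientAddGroup.mk' _).comp ψ with hφdef
    have hφsurj : Function.Surjective φ := by
      rintro ⟨⟨_, x, rfl⟩⟩
      exact ⟨x, rfl⟩
    have hker : φ.ker = (P ⊔ N).toAddSubgroup := by
      ext x
      have hiff : φ x = 0 ↔ f x ∈ T := by
        rw [hφdef, AddMonoidHom.comp_apply, QuotientAddGroup.mk'_apply,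
          QuotientAddGroup.eq_zero_iff]
        exact Iff.rfl
      rw [AddMonoidHom.mem_ker, hiff]
      constructor
      · intro hfx
        obtain ⟨y, hy, h2y⟩ := (hTmem _).mp hfx
        have hcx : c x = x + y + y := by
          have h' : y + y = c x - x := by simpa [hfdef] using h2y
          rw [eq_sub_iff_add_eq] at h'
          rw [← h']; abel
        have hxy : x + y ∈ P := by
          rw [hPmem]
          have hcy := (hNmem y).mp hy
          rw [map_add, hcx, hcy]
          abel
        have hx' : x = (x + y) + (-y) := by abel
        rw [Submodule.mem_toAddSubgroup, hx']
        exact Submodule.add_mem_sup hxy (N.neg_mem hy)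
      · intro hx
        rw [Submodule.mem_toAddSubgroup, Submodule.mem_sup] at hx
        obtain ⟨p, hp, n, hn, rfl⟩ := hx
        rw [hTmem]
        refine ⟨-n, N.neg_mem hn, ?_⟩
        have hcp := (hPmem p).mp hp
        have hcn := (hNmem n).mp hn
        simp [hfdef, hcp, hcn]
        abel
    have e := QuotientAddGroup.quotientKerEquivOfSurjective φ hφsurj
    have h0 : Nat.card (Λ ⧸ (P ⊔ N)) = Nat.card (Λ ⧸ φ.ker) := by rw [hker]; rfl
    have h1 : Nat.card (Λ ⧸ φ.ker) = Nat.card Q := Nat.card_congr e.toEquiv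
    rw [h0, h1, hQdef, AddSubgroup.relIndex, AddSubgroup.index_eq_card]
  -- instances on the submodule N
  haveI : IsNoetherian ℤ Λ := isNoetherian_of_isNoetherianRing_of_finite ℤ Λ
  have hNfg : N.FG := IsNoetherian.noetherian N
  letI : Unique (Module ℤ ↥N) := AddCommGroup.uniqueIntModule
  have hMod : N.module = (AddCommGroup.toIntModule ↥N) := Subsingleton.elim _ _
  have h1 : @Module.Finite ℤ ↥N _ _ N.module := Module.Finite.iff_fg.mpr hNfg
  have h2 : @Module.Free ℤ ↥N _ _ N.module := by
    letI := N.module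
    haveI := h1
    infer_instance
  haveI hNfin : Module.Finite ℤ ↥N := by rw [← hMod]; exact h1
  haveI hNfree : Module.Free ℤ ↥N := by rw [← hMod]; exact h2
  -- Claim C : T'.relIndex N' = 2 ^ finrank
  have claimC : T'.relIndex N' = 2 ^ Module.finrank ℤ N := by
    rw [AddSubgroup.relIndex, AddSubgroup.index_eq_card]
    have hsub : T'.addSubgroupOf N' =
        (LinearMap.range (LinearMap.id + LinearMap.id : N →ₗ[ℤ] N)).toAddSubgroup := by
      ext x
      simp only [AddSubgroup.mem_addSubgroupOf, Submodule.mem_toAddSubgroup,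
        LinearMap.mem_range, LinearMap.add_apply, LinearMap.id_apply]
      rw [show ((x : Λ) ∈ T' ↔ (x : Λ) ∈ T) from Iff.rfl, hTmem]
      constructor
      · rintro ⟨y, hy, h2y⟩
        exact ⟨⟨y, hy⟩, Subtype.ext h2y⟩
      · rintro ⟨y, h2y⟩
        exact ⟨(y : Λ), y.2, congrArg Subtype.val h2y⟩
    rw [hsub]
    have hcast : Nat.card (N' ⧸ (LinearMap.range
        (LinearMap.id + LinearMap.id : N →ₗ[ℤ] N)).toAddSubgroup) =
        Nat.card (N ⧸ LinearMap.range (LinearMap.id + LinearMap.id : N →ₗ[ℤ] N)) := rfl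
    rw [hcast, quotTwo_card]
  have claimB : T'.relIndex R' * R'.relIndex N' = T'.relIndex N' :=
    AddSubgroup.relIndex_mul_relIndex T' R' N' hTR' hRN'
  have cardQ2 : Nat.card (N' ⧸ R'.addSubgroupOf N') = R'.relIndex N' := by
    rw [AddSubgroup.relIndex, AddSubgroup.index_eq_card]
  have main : Nat.card (Λ ⧸ (P ⊔ N)) * Nat.card (N' ⧸ R'.addSubgroupOf N') =
      2 ^ Module.finrank ℤ N := by
    rw [claimA, cardQ2, claimB, claimC]
  have hne : (2 : ℕ) ^ Module.finrank ℤ N ≠ 0 := pow_ne_zero _ two_ne_zero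
  have h1ne : Nat.card (Λ ⧸ (P ⊔ N)) ≠ 0 := fun h => hne (by rw [← main, h, zero_mul])
  have h2ne : Nat.card (N' ⧸ R'.addSubgroupOf N') ≠ 0 :=
    fun h => hne (by rw [← main, h, mul_zero])
  exact ⟨(Nat.card_ne_zero.mp h1ne).2, (Nat.card_ne_zero.mp h2ne).2, main⟩
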